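/- Let S ⊆ ℝ^d and suppose that for every s ∈ ∂S (the topological boundary of S) there exists a nonempty open convex set C with C ⊆ S and s ∈ ∂C. Then the Lebesgue measure of ∂S is zero. -/

import Mathlib

open Set MeasureTheory Metric Filter Topology

/-- If every boundary point of `S ⊆ ℝ^d` lies on the boundary of some nonempty open
convex set contained in `S`, then the Lebesgue measure of `∂S` is zero. -/
theorem frontier_measure_zero_of_inscribed_convex {d : ℕ}
    (S : Set (Fin d → ℝ))
    (h : ∀ s ∈ frontier S, ∃ C : Set (Fin d → ℝ),
      C.Nonempty ∧ IsOpen C ∧ Convex ℝ C ∧ C ⊆ S ∧ s ∈ frontier C) :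
    volume (frontier S) = 0 := by
  rcases Nat.eq_zero_or_pos d with hd | hd
  · subst hd
    haveI : Subsingleton (Fin 0 → ℝ) := by infer_instance
    rcases S.eq_empty_or_nonempty with rfl | ⟨z, hz⟩
    · simp
    · have : S = univ := eq_univ_of_forall fun w => (Subsingleton.elim z w) ▸ hz
      simp [this]
  haveI : NeZero d := ⟨hd.ne'⟩
  haveI : Nontrivial (Fin d → ℝ) := by infer_instance
  have hF : MeasurableSet (frontier S) := isClosed_frontier.measurableSet
  by_contra hvol
  -- find a density point of the frontier inside the frontier
  obtain ⟨x, hxF, htend⟩ : ∃ x ∈ frontier S,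
      Tendsto (fun r => volume (frontier S ∩ closedBall x r) / volume (closedBall x r))
        (𝓝[>] 0) (𝓝 1) := by
    by_contra hc
    push_neg at hc
    apply hvol
    have hdens := Besicovitch.ae_tendsto_measure_inter_div_of_measurableSet volume hF
    rw [ae_iff] at hdens
    refine measure_mono_null (fun x hxF => ?_) hdens
    simp only [mem_setOf_eq]
    intro ht
    exact hc x hxF (by simpa [Set.indicator_of_mem hxF] using ht)
  obtain ⟨C, hCne, hCo, hCc, hCS, hxC⟩ := h x hxF
  obtain ⟨y, hyC⟩ := hCne
  obtain ⟨ρ, hρ, hball⟩ := Metric.isOpen_iff.1 hCo y hyC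
  set n := Module.finrank ℝ (Fin d → ℝ) with hn
  set D : ℝ := dist x y + ρ with hD
  have hD0 : 0 < D := by positivity
  set κ : ℝ := ρ / D with hκ
  have hκ0 : 0 < κ := by positivity
  set ε : ENNReal := ENNReal.ofReal (κ ^ n) with hε
  have hε0 : 0 < ε := by
    rw [hε]
    exact ENNReal.ofReal_pos.2 (by positivity)
  have hB0 : volume (ball (0 : Fin d → ℝ) 1) ≠ 0 :=
    (measure_ball_pos volume 0 one_pos).ne'
  have hBtop : volume (ball (0 : Fin d → ℝ) 1) ≠ ⊤ := measure_ball_lt_top.ne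
  have key : ∀ r ∈ Ioc (0:ℝ) D,
      volume (frontier S ∩ closedBall x r) / volume (closedBall x r) ≤ 1 - ε := by
    intro r ⟨hr0, hrD⟩
    set t : ℝ := r / D with htdef
    have ht0 : 0 < t := by positivity
    have ht1 : t ≤ 1 := (div_le_one hD0).2 hrD
    set c : Fin d → ℝ := t • y + (1 - t) • x with hc
    -- the small ball is in C
    have hsub1 : ball c (t * ρ) ⊆ C := by
      intro z hz
      have hw : y + t⁻¹ • (z - c) ∈ ball y ρ := by
        rw [mem_ball, dist_eq_norm]
        have : y + t⁻¹ • (z - c) - y = t⁻¹ • (z - c) := by abel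
        rw [this, norm_smul, Real.norm_eq_abs, abs_of_pos (by positivity)]
        rw [mem_ball, dist_eq_norm] at hz
        calc t⁻¹ * ‖z - c‖ < t⁻¹ * (t * ρ) := by
              exact mul_lt_mul_of_pos_left hz (by positivity)
          _ = ρ := by field_simp
      have hwC : y + t⁻¹ • (z - c) ∈ interior C := by
        rw [hCo.interior_eq]; exact hball hw
      have hxcl : x ∈ closure C := hxC.1
      have := hCc.combo_interior_closure_mem_interior hwC hxcl ht0 (by linarith)
        (by ring : t + (1 - t) = 1)
      have hz' : t • (y + t⁻¹ • (z - c)) + (1 - t) • x = z := by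
        have : t • (t⁻¹ • (z - c)) = z - c := by
          rw [smul_smul, mul_inv_cancel₀ ht0.ne', one_smul]
        rw [smul_add, this, hc]
        abel
      rw [hz'] at this
      rwa [hCo.interior_eq] at this
    -- the small ball is in the big closed ball
    have hsub2 : ball c (t * ρ) ⊆ closedBall x r := by
      intro z hz
      rw [mem_closedBall]
      refine le_of_lt ?_
      have hcx : dist c x = t * dist y x := by
        rw [dist_eq_norm, dist_eq_norm]
        have : c - x = t • (y - x) := by rw [hc]; module
        rw [this, norm_smul, Real.norm_eq_abs, abs_of_pos ht0]
      calc dist z x ≤ dist z c + dist c x := dist_triangle z c x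
        _ < t * ρ + t * dist y x := by
            rw [hcx]; exact add_lt_add_of_lt_of_le (mem_ball.1 hz) le_rfl
        _ = t * D := by rw [hD, dist_comm]; ring
        _ = r := by rw [htdef]; field_simp
    -- volume computation
    have hvcb : volume (closedBall x r)
        = ENNReal.ofReal (r ^ n) * volume (ball (0 : Fin d → ℝ) 1) :=
      Measure.addHaar_closedBall volume x hr0.le
    have hvsb : volume (ball c (t * ρ))
        = ENNReal.ofReal ((t * ρ) ^ n) * volume (ball (0 : Fin d → ℝ) 1) :=
      Measure.addHaar_ball volume c (by positivity)
    have hv0 : volume (closedBall x r) ≠ 0 :=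
      (measure_closedBall_pos volume x hr0).ne'
    have hvtop : volume (closedBall x r) ≠ ⊤ := measure_closedBall_lt_top.ne
    have hratio : ε ≤ volume (C ∩ closedBall x r) / volume (closedBall x r) := by
      have hmono : volume (ball c (t * ρ)) ≤ volume (C ∩ closedBall x r) :=
        measure_mono (subset_inter hsub1 hsub2)
      refine le_trans ?_ (ENNReal.div_le_div_right hmono _)
      rw [hvsb, hvcb, ENNReal.mul_div_mul_right _ _ hB0 hBtop,
        ← ENNReal.ofReal_div_of_pos (by positivity), hε]
      have : (t * ρ) ^ n / r ^ n = κ ^ n := by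
        rw [← div_pow, hκ, htdef]
        congr 1
        field_simp
      rw [this]
    -- disjointness and sum bound
    have hdisj : Disjoint (frontier S ∩ closedBall x r) (C ∩ closedBall x r) := by
      refine Set.disjoint_left.2 fun a ⟨haF, _⟩ ⟨haC, _⟩ => ?_
      have : a ∈ interior S := interior_maximal hCS hCo haC
      exact disjoint_interior_frontier.le_bot ⟨this, haF⟩
    have hsum : volume (frontier S ∩ closedBall x r) + volume (C ∩ closedBall x r)
        ≤ volume (closedBall x r) := by
      rw [← measure_union hdisj (hCo.measurableSet.inter measurableSet_closedBall)]
      exact measure_mono (union_subset inter_subset_right inter_subset_right)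
    have hle1 : volume (frontier S ∩ closedBall x r) / volume (closedBall x r) + ε ≤ 1 := by
      calc volume (frontier S ∩ closedBall x r) / volume (closedBall x r) + ε
          ≤ volume (frontier S ∩ closedBall x r) / volume (closedBall x r)
            + volume (C ∩ closedBall x r) / volume (closedBall x r) :=
            by gcongr
        _ = (volume (frontier S ∩ closedBall x r) + volume (C ∩ closedBall x r))
            / volume (closedBall x r) := ENNReal.div_add_div_same
        _ ≤ 1 := by
            rw [ENNReal.div_le_iff hv0 hvtop, one_mul]
            exact hsum
    exact ENNReal.le_sub_of_add_le_right ENNReal.ofReal_ne_top hle1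
  have hlt : (1 : ENNReal) - ε < 1 :=
    ENNReal.sub_lt_self ENNReal.one_ne_top one_ne_zero hε0.ne'
  have h1 : ∀ᶠ r in 𝓝[>] (0:ℝ),
      volume (frontier S ∩ closedBall x r) / volume (closedBall x r) ≤ 1 - ε :=
    eventually_of_mem (Ioc_mem_nhdsGT_of_mem ⟨le_refl _, hD0⟩) key
  have h2 : ∀ᶠ r in 𝓝[>] (0:ℝ),
      1 - ε < volume (frontier S ∩ closedBall x r) / volume (closedBall x r) :=
    htend.eventually (eventually_gt_nhds hlt)
  obtain ⟨r, hr1, hr2⟩ := (h1.and h2).exists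
  exact absurd hr1 (not_le.2 hr2)
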